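/- Quantitative form of the paper's Claim 1 (low-dimensional dynamics require a small singular value of the recurrent alignment matrix): assume σ_k ≥ s for all k = 1,…,r, where s > 0. Let z ∈ ℝ^N with ‖z‖ = 1 and suppose ‖(I − W) z‖ ≤ ε, ‖Uᵀ (W₁ z)‖ ≤ δ, and ‖z − U Uᵀ z‖ ≤ η. Then the vector y = Uᵀ z ∈ ℝ^r satisfies ‖y‖ ≥ 1 − η and ‖P y‖ ≤ (1 + δ + ε)/s + η. In particular, if I − W has an asymptotically small singular value and the perturbation terms ε, δ, η are small, then P = VᵀU has an asymptotically small singular value. -/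

import Mathlib

open Matrix

/-- A vector of `ℝ^n` regarded as an element of Euclidean space, so that `‖euc x‖`
is the Euclidean (`ℓ²`) norm of `x`. -/
noncomputable def euc {n : ℕ} (x : Fin n → ℝ) : EuclideanSpace ℝ (Fin n) := WithLp.toLp 2 x

/-- The operator norm of a square matrix acting on Euclidean space by
matrix–vector multiplication. -/
noncomputable def l2OpNorm {n : ℕ} (M : Matrix (Fin n) (Fin n) ℝ) : ℝ :=
  ‖Matrix.toEuclideanCLM (𝕜 := ℝ) M‖

lemma euc_norm_eq {n : ℕ} (x : Fin n → ℝ) : ‖euc x‖ = Real.sqrt (x ⬝ᵥ x) := by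
  rw [EuclideanSpace.norm_eq]
  congr 1
  simp [euc, dotProduct, Real.norm_eq_abs, sq_abs, sq]

lemma dot_mulVec_self {m n : ℕ} (A : Matrix (Fin m) (Fin n) ℝ) (x : Fin n → ℝ) :
    (A *ᵥ x) ⬝ᵥ (A *ᵥ x) = x ⬝ᵥ ((Aᵀ * A) *ᵥ x) := by
  rw [← Matrix.mulVec_mulVec, Matrix.dotProduct_mulVec x Aᵀ (A *ᵥ x),
    Matrix.vecMul_transpose]

lemma dot_self_nonneg {n : ℕ} (x : Fin n → ℝ) : 0 ≤ x ⬝ᵥ x :=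
  Finset.sum_nonneg fun i _ => mul_self_nonneg (x i)

lemma euc_norm_eqOn {N r : ℕ} (A : Matrix (Fin N) (Fin r) ℝ) (hA : Aᵀ * A = 1)
    (x : Fin r → ℝ) : ‖euc (A *ᵥ x)‖ = ‖euc x‖ := by
  rw [euc_norm_eq, euc_norm_eq, dot_mulVec_self, hA, Matrix.one_mulVec]

lemma euc_norm_transpose_le {N r : ℕ} (A : Matrix (Fin N) (Fin r) ℝ) (hA : Aᵀ * A = 1)
    (x : Fin N → ℝ) : ‖euc (Aᵀ *ᵥ x)‖ ≤ ‖euc x‖ := by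
  rw [euc_norm_eq, euc_norm_eq]
  apply Real.sqrt_le_sqrt
  have hMM : A * Aᵀ * (A * Aᵀ) = A * Aᵀ := by
    rw [Matrix.mul_assoc, ← Matrix.mul_assoc Aᵀ A Aᵀ, hA, Matrix.one_mul]
  have h1 : ((1 - A * Aᵀ)ᵀ) * (1 - A * Aᵀ) = 1 - A * Aᵀ := by
    rw [Matrix.transpose_sub, Matrix.transpose_one, Matrix.transpose_mul,
      Matrix.transpose_transpose, Matrix.sub_mul, Matrix.one_mul, Matrix.mul_sub,
      Matrix.mul_one, hMM]
    abel
  have key : 0 ≤ x ⬝ᵥ ((1 - A * Aᵀ) *ᵥ x) := by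
    rw [← h1, ← dot_mulVec_self]
    exact dot_self_nonneg _
  rw [Matrix.sub_mulVec, Matrix.one_mulVec, dotProduct_sub, sub_nonneg] at key
  calc (Aᵀ *ᵥ x) ⬝ᵥ (Aᵀ *ᵥ x) = x ⬝ᵥ ((A * Aᵀ) *ᵥ x) := by
        rw [dot_mulVec_self, Matrix.transpose_transpose]
    _ ≤ x ⬝ᵥ x := key

lemma euc_norm_diag_ge {r : ℕ} (σ : Fin r → ℝ) (s : ℝ) (hs : 0 ≤ s)
    (hσs : ∀ j, s ≤ σ j) (x : Fin r → ℝ) :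
    s * ‖euc x‖ ≤ ‖euc ((Matrix.diagonal σ) *ᵥ x)‖ := by
  rw [euc_norm_eq, euc_norm_eq, ← Real.sqrt_sq hs, ← Real.sqrt_mul (sq_nonneg s)]
  apply Real.sqrt_le_sqrt
  rw [dotProduct, dotProduct, Finset.mul_sum]
  apply Finset.sum_le_sum
  intro i _
  rw [Matrix.mulVec_diagonal]
  have h1 : s * s * (x i * x i) ≤ σ i * σ i * (x i * x i) := by
    apply mul_le_mul_of_nonneg_right _ (mul_self_nonneg _)
    exact mul_le_mul (hσs i) (hσs i) hs (hs.trans (hσs i))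
  calc s ^ 2 * (x i * x i) = s * s * (x i * x i) := by ring
    _ ≤ σ i * σ i * (x i * x i) := h1
    _ = σ i * x i * (σ i * x i) := by ring

lemma euc_sub {n : ℕ} (a b : Fin n → ℝ) : euc (a - b) = euc a - euc b := by simp [euc]

theorem claim_one_quantitative
    (N r : ℕ) (hr : 1 ≤ r) (hNr : r ≤ N)
    (U V : Matrix (Fin N) (Fin r) ℝ)
    (hU : Uᵀ * U = 1) (hV : Vᵀ * V = 1)
    (σ : Fin r → ℝ) (hσ : ∀ j, 0 < σ j)
    (W₁ : Matrix (Fin N) (Fin N) ℝ)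
    (W : Matrix (Fin N) (Fin N) ℝ)
    (hW : W = U * Matrix.diagonal σ * Vᵀ + W₁)
    (P : Matrix (Fin r) (Fin r) ℝ) (hP : P = Vᵀ * U)
    (s : ℝ) (hs : 0 < s) (hσs : ∀ j, s ≤ σ j)
    (ε δ η : ℝ)
    (z : Fin N → ℝ) (hz : ‖euc z‖ = 1)
    (hε : ‖euc ((1 - W).mulVec z)‖ ≤ ε)
    (hδ : ‖euc (Uᵀ.mulVec (W₁.mulVec z))‖ ≤ δ)
    (hη : ‖euc (z - (U * Uᵀ).mulVec z)‖ ≤ η)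
    (y : Fin r → ℝ) (hy : y = Uᵀ.mulVec z) :
    ‖euc y‖ ≥ 1 - η ∧ ‖euc (P.mulVec y)‖ ≤ (1 + δ + ε) / s + η := by
  have hyU : ‖euc ((U * Uᵀ) *ᵥ z)‖ = ‖euc y‖ := by
    rw [← Matrix.mulVec_mulVec, ← hy, euc_norm_eqOn U hU]
  have part1 : ‖euc y‖ ≥ 1 - η := by
    have h := norm_sub_norm_le (euc z) (euc ((U * Uᵀ) *ᵥ z))
    rw [← euc_sub, hz, hyU] at h
    linarith [hη]
  refine ⟨part1, ?_⟩
  have hyz : ‖euc y‖ ≤ 1 := by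
    rw [hy, ← hz]; exact euc_norm_transpose_le U hU z
  have h1 : Uᵀ *ᵥ (W *ᵥ z)
      = (Matrix.diagonal σ) *ᵥ (Vᵀ *ᵥ z) + Uᵀ *ᵥ (W₁ *ᵥ z) := by
    rw [hW, Matrix.add_mulVec, Matrix.mulVec_add]
    congr 1
    rw [Matrix.mulVec_mulVec, Matrix.mulVec_mulVec]
    congr 1
    rw [← Matrix.mul_assoc, ← Matrix.mul_assoc, hU, Matrix.one_mul]
  have h2 : Uᵀ *ᵥ ((1 - W) *ᵥ z)
      = y - ((Matrix.diagonal σ) *ᵥ (Vᵀ *ᵥ z) + Uᵀ *ᵥ (W₁ *ᵥ z)) := by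
    rw [Matrix.sub_mulVec, Matrix.one_mulVec, Matrix.mulVec_sub, hy, h1]
  have hkey : (Matrix.diagonal σ) *ᵥ (Vᵀ *ᵥ z)
      = y - Uᵀ *ᵥ ((1 - W) *ᵥ z) - Uᵀ *ᵥ (W₁ *ᵥ z) := by
    rw [h2]; abel
  have hSig : ‖euc ((Matrix.diagonal σ) *ᵥ (Vᵀ *ᵥ z))‖ ≤ 1 + δ + ε := by
    rw [hkey]
    have t1 := norm_sub_le (euc (y - Uᵀ *ᵥ ((1 - W) *ᵥ z))) (euc (Uᵀ *ᵥ (W₁ *ᵥ z)))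
    have t2 := norm_sub_le (euc y) (euc (Uᵀ *ᵥ ((1 - W) *ᵥ z)))
    rw [← euc_sub] at t1 t2
    have t3 : ‖euc (Uᵀ *ᵥ ((1 - W) *ᵥ z))‖ ≤ ε :=
      (euc_norm_transpose_le U hU _).trans hε
    linarith [hδ]
  have hVz : ‖euc (Vᵀ *ᵥ z)‖ ≤ (1 + δ + ε) / s := by
    rw [le_div_iff₀ hs]
    have := euc_norm_diag_ge σ s hs.le hσs (Vᵀ *ᵥ z)
    linarith
  have hPy : P *ᵥ y = Vᵀ *ᵥ z - Vᵀ *ᵥ (z - (U * Uᵀ) *ᵥ z) := by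
    rw [hP, ← Matrix.mulVec_mulVec, hy, Matrix.mulVec_mulVec,
      ← Matrix.mulVec_sub, sub_sub_cancel, Matrix.mulVec_mulVec,
      Matrix.mul_assoc, Matrix.mulVec_mulVec]
  have t4 := norm_sub_le (euc (Vᵀ *ᵥ z)) (euc (Vᵀ *ᵥ (z - (U * Uᵀ) *ᵥ z)))
  rw [← euc_sub] at t4
  have t5 : ‖euc (Vᵀ *ᵥ (z - (U * Uᵀ) *ᵥ z))‖ ≤ η :=
    (euc_norm_transpose_le V hV _).trans hη
  rw [hPy]
  linarith
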